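/- Let (λ_k)_{|k| ≥ n₀+1} be complex numbers with Re λ_k < -1 for all such k, let (w_k) solve the ODEs w_k'(t) = λ_k w_k(t) + a_k v(t) + b_k v_d(t) + r_k(t), and let X solve X'(t) = A_K X(t) + Γ(t) where A_K is Hurwitz with A_Kᵀ P + P A_K = -I for a symmetric positive definite P. Suppose ‖Γ(t)‖² ≤ C₀² R(t) + 2|z_r(t)|², Σ_{|k|≥n₀+1}(|a_k|² + |b_k|²) < ∞, v_d(t) = K X(t), |v(t)| ≤ ‖X(t)‖, and Σ|r_k(t)|² ≤ R(t)/m_R with R(t) ≤ ε² C₁² (‖X(t)‖² + Σ_{|k|≥n₀+1}|w_k(t)|²). Then for M > 3(‖a‖² + ‖b‖²‖K‖²)/m_R and ε sufficiently small, the Lyapunov function V(t) = M X(t)ᵀ P X(t) + (1/2) Σ_{|k|≥n₀+1}|w_k(t)|² satisfies V'(t) ≤ -2κ V(t) + C₂ |z_r(t)|² for some constants κ, C₂ > 0 independent of the solution. -/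

import Mathlib

open MeasureTheory Set Finset

lemma normsq_hasDerivAt {w : ℝ → ℂ} {d : ℂ} {t : ℝ} (h : HasDerivAt w d t) :
    HasDerivAt (fun s => ‖w s‖^2) (2 * ((starRingEnd ℂ) (w t) * d).re) t := by
  have hre : HasDerivAt (fun s => (w s).re) d.re t :=
    (Complex.reCLM.hasFDerivAt.comp_hasDerivAt t h)
  have him : HasDerivAt (fun s => (w s).im) d.im t :=
    (Complex.imCLM.hasFDerivAt.comp_hasDerivAt t h)
  have h2 : HasDerivAt (fun s => (w s).re * (w s).re + (w s).im * (w s).im)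
      (d.re * (w t).re + (w t).re * d.re + (d.im * (w t).im + (w t).im * d.im)) t :=
    (hre.mul hre).add (him.mul him)
  have heq : (fun s => ‖w s‖^2) = fun s => (w s).re * (w s).re + (w s).im * (w s).im := by
    funext s
    rw [← Complex.normSq_apply, ← Complex.sq_norm]
  rw [heq]
  convert h2 using 1
  simp [Complex.mul_re, Complex.conj_re, Complex.conj_im]
  ring

lemma quad_bound (z q lam : ℂ) (hl : lam.re ≤ -1) :
    2 * ((starRingEnd ℂ) z * (lam * z + q)).re ≤ -‖z‖^2 + ‖q‖^2 := by
  have hz : ‖z‖^2 = z.re^2 + z.im^2 := by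
    rw [Complex.sq_norm, Complex.normSq_apply]; ring
  have hq : ‖q‖^2 = q.re^2 + q.im^2 := by
    rw [Complex.sq_norm, Complex.normSq_apply]; ring
  rw [hz, hq]
  simp only [Complex.mul_re, Complex.add_re, Complex.add_im, Complex.mul_im,
    Complex.conj_re, Complex.conj_im]
  nlinarith [sq_nonneg (z.re - q.re), sq_nonneg (z.im - q.im), sq_nonneg z.re, sq_nonneg z.im,
    mul_le_mul_of_nonneg_right hl (by positivity : (0:ℝ) ≤ z.re^2 + z.im^2)]

lemma three_sq_bound (z1 z2 z3 : ℂ) :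
    ‖z1 + z2 + z3‖^2 ≤ 3*(‖z1‖^2 + ‖z2‖^2 + ‖z3‖^2) := by
  have h : ‖z1 + z2 + z3‖ ≤ ‖z1‖ + ‖z2‖ + ‖z3‖ := by
    calc ‖z1 + z2 + z3‖ ≤ ‖z1 + z2‖ + ‖z3‖ := norm_add_le _ _
    _ ≤ ‖z1‖ + ‖z2‖ + ‖z3‖ := by linarith [norm_add_le z1 z2]
  nlinarith [norm_nonneg (z1+z2+z3), norm_nonneg z1, norm_nonneg z2, norm_nonneg z3,
    sq_nonneg (‖z1‖-‖z2‖), sq_nonneg (‖z1‖-‖z3‖), sq_nonneg (‖z2‖-‖z3‖)]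

lemma deriv_le_of_slope {f g : ℝ → ℝ} {t f' g' : ℝ}
    (hf : HasDerivAt f f' t) (hg : HasDerivAt g g' t)
    (h : ∀ h' : ℝ, 0 < h' → f (t + h') - f t ≤ g (t + h') - g t) : f' ≤ g' := by
  have hmap : Filter.Tendsto (fun h' : ℝ => t + h') (nhdsWithin 0 (Set.Ioi 0))
      (nhdsWithin t {t}ᶜ) := by
    apply Filter.Tendsto.inf
    · exact (continuous_const.add continuous_id).tendsto' 0 t (by simp)
    · rw [Filter.tendsto_principal_principal]
      intro h' hh'
      simp only [Set.mem_compl_iff, Set.mem_singleton_iff]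
      have : (0:ℝ) < h' := hh'
      intro hc
      nlinarith
  have hfs : Filter.Tendsto (fun h' : ℝ => (f (t + h') - f t) / h')
      (nhdsWithin 0 (Set.Ioi 0)) (nhds f') := by
    have := (hasDerivAt_iff_tendsto_slope.1 hf).comp hmap
    refine this.congr fun h' => ?_
    simp [slope_def_field]
  have hgs : Filter.Tendsto (fun h' : ℝ => (g (t + h') - g t) / h')
      (nhdsWithin 0 (Set.Ioi 0)) (nhds g') := by
    have := (hasDerivAt_iff_tendsto_slope.1 hg).comp hmap
    refine this.congr fun h' => ?_
    simp [slope_def_field]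
  refine le_of_tendsto_of_tendsto hfs hgs ?_
  filter_upwards [self_mem_nhdsWithin] with h' (hh' : 0 < h')
  exact (div_le_div_iff_of_pos_right hh').mpr (h h' hh')

lemma lyap_sum {m : ℕ} (A P : Matrix (Fin m) (Fin m) ℝ)
    (hL : A.transpose * P + P * A = -1) (Y : Fin m → ℝ) :
    (∑ i, ∑ j, (A.mulVec Y) i * P i j * Y j) + ∑ i, ∑ j, Y i * P i j * (A.mulVec Y) j
      = -∑ i, Y i^2 := by
  have h1 : ∑ i, ∑ j, (A.mulVec Y) i * P i j * Y j
      = dotProduct Y ((A.transpose * P).mulVec Y) := by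
    rw [← Matrix.mulVec_mulVec, Matrix.dotProduct_mulVec, Matrix.vecMul_transpose]
    simp only [dotProduct, Matrix.mulVec, Finset.mul_sum]
    exact Finset.sum_congr rfl fun i _ => Finset.sum_congr rfl fun j _ => by ring
  have h2 : ∑ i, ∑ j, Y i * P i j * (A.mulVec Y) j
      = dotProduct Y ((P * A).mulVec Y) := by
    rw [← Matrix.mulVec_mulVec]
    simp only [dotProduct, Matrix.mulVec, Finset.mul_sum]
    exact Finset.sum_congr rfl fun i _ => Finset.sum_congr rfl fun j _ =>
      Finset.sum_congr rfl fun l _ => by ring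
  rw [h1, h2, ← dotProduct_add, ← Matrix.add_mulVec, hL]
  simp [Matrix.neg_mulVec, dotProduct, sq]

set_option maxHeartbeats 1000000 in
theorem stmt_9 (m n₀ : ℕ)
    (lam a b : {k : ℤ // (n₀ : ℤ) + 1 ≤ |k|} → ℂ)
    (hlam : ∀ k, (lam k).re < -1)
    (P A_K : Matrix (Fin m) (Fin m) ℝ)
    (hPsymm : P.IsSymm) (hPpos : P.PosDef)
    (hLyap : A_K.transpose * P + P * A_K = -1)
    (KK : Fin m → ℝ) (Knorm : ℝ) (hKn : ∑ i, (KK i)^2 ≤ Knorm^2)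
    (m_R C₀ C₁ na2 nb2 M : ℝ) (hmR : 0 < m_R)
    (hsa : Summable (fun k => ‖a k‖^2)) (hsb : Summable (fun k => ‖b k‖^2))
    (hna : ∑' k, ‖a k‖^2 ≤ na2 / m_R) (hnb : ∑' k, ‖b k‖^2 ≤ nb2 / m_R)
    (hM : M > 3 * (na2 + nb2 * Knorm^2) / m_R) :
    ∃ ε₀ > 0, ∃ κ > 0, ∃ C₂ > 0,
      ∀ ε : ℝ, 0 < ε → ε ≤ ε₀ →
      ∀ (X Γ : ℝ → Fin m → ℝ)
        (w r : {k : ℤ // (n₀ : ℤ) + 1 ≤ |k|} → ℝ → ℂ)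
        (v v_d z_r R V V' : ℝ → ℝ),
        (∀ t i, HasDerivAt (fun s => X s i) ((A_K.mulVec (X t)) i + Γ t i) t) →
        (∀ t k, HasDerivAt (w k)
          (lam k * w k t + a k * (v t : ℂ) + b k * (v_d t : ℂ) + r k t) t) →
        (∀ t, v_d t = ∑ i, KK i * X t i) →
        (∀ t, |v t| ≤ Real.sqrt (∑ i, (X t i)^2)) →
        (∀ t, ∑ i, (Γ t i)^2 ≤ C₀^2 * R t + 2 * (z_r t)^2) →
        (∀ t, Summable (fun k => ‖r k t‖^2)) →
        (∀ t, ∑' k, ‖r k t‖^2 ≤ R t / m_R) →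
        (∀ t, Summable (fun k => ‖w k t‖^2)) →
        (∀ t, 0 ≤ R t) →
        (∀ t, R t ≤ ε^2 * C₁^2 * ((∑ i, (X t i)^2) + ∑' k, ‖w k t‖^2)) →
        (∀ t, V t = M * (∑ i, ∑ j, X t i * P i j * X t j)
            + (1/2) * ∑' k, ‖w k t‖^2) →
        (∀ t, HasDerivAt V (V' t) t) →
        ∀ t, V' t ≤ -2 * κ * V t + C₂ * (z_r t)^2 := by
  -- nonnegativity of the abstract constants
  have hna0 : 0 ≤ na2 / m_R := le_trans (tsum_nonneg fun k => sq_nonneg _) hna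
  have hnb0 : 0 ≤ nb2 / m_R := le_trans (tsum_nonneg fun k => sq_nonneg _) hnb
  have hKn0 : 0 ≤ Knorm^2 := sq_nonneg _
  have hna2 : 0 ≤ na2 := by
    nlinarith [mul_nonneg hna0 hmR.le, div_mul_cancel₀ na2 hmR.ne']
  have hnb2 : 0 ≤ nb2 := by
    nlinarith [mul_nonneg hnb0 hmR.le, div_mul_cancel₀ nb2 hmR.ne']
  have hc₁0 : 0 ≤ 3 * (na2 + nb2 * Knorm^2) / m_R := by
    apply div_nonneg ?_ hmR.le
    nlinarith
  have hM0 : 0 < M := lt_of_le_of_lt hc₁0 hM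
  obtain ⟨p, hpdef⟩ : ∃ p : ℝ, p = ∑ i, ∑ j, |P i j| := ⟨_, rfl⟩
  have hp0 : 0 ≤ p := hpdef ▸ Finset.sum_nonneg fun i _ => Finset.sum_nonneg fun j _ => abs_nonneg _
  obtain ⟨D, hDdef⟩ : ∃ D : ℝ, D = 4*M*p^2*C₀^2*C₁^2 + (3/2)*C₁^2/m_R := ⟨_, rfl⟩
  have hD0 : 0 ≤ D := by rw [hDdef]; positivity
  have hmin : 0 < min (M/8) (1/4 : ℝ) := lt_min (by linarith) (by norm_num)
  refine ⟨Real.sqrt (min (M/8) (1/4) / (D+1)), Real.sqrt_pos.2 (by positivity), 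
    min (1/(16*(max p 1))) (1/4), lt_min (by positivity) (by norm_num), 8*M*p^2+1, by positivity, ?_⟩
  intro ε hε hεub X Γ w r v v_d z_r R V V' hX hw hvd hv hΓ hsr hr hsw hR0 hRb hV hV' t
  -- basic abbreviations
  obtain ⟨x, hxdef⟩ : ∃ x : ℝ → ℝ, ∀ s, x s = ∑ i, (X s i)^2 := ⟨_, fun _ => rfl⟩
  obtain ⟨S, hSdef⟩ : ∃ S : ℝ → ℝ, ∀ s, S s = ∑' k, ‖w k s‖^2 := ⟨_, fun _ => rfl⟩
  obtain ⟨F, hFdef⟩ : ∃ F : ℝ → ℝ, ∀ s, F s = M * (∑ i, ∑ j, X s i * P i j * X s j) :=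
    ⟨_, fun _ => rfl⟩
  obtain ⟨q, hqdef⟩ : ∃ q : {k : ℤ // (n₀ : ℤ) + 1 ≤ |k|} → ℝ → ℂ,
      ∀ k s, q k s = a k * (v s : ℂ) + b k * (v_d s : ℂ) + r k s := ⟨_, fun _ _ => rfl⟩
  obtain ⟨XD, hXDdef⟩ : ∃ XD : ℝ → Fin m → ℝ,
      ∀ s i, XD s i = (A_K.mulVec (X s)) i + Γ s i := ⟨_, fun _ _ => rfl⟩
  obtain ⟨F', hF'def⟩ : ∃ F' : ℝ → ℝ, ∀ s, F' s =
      M * ∑ i, ∑ j, (XD s i * P i j * X s j + X s i * P i j * XD s j) := ⟨_, fun _ => rfl⟩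
  have hx0 : ∀ s, 0 ≤ x s := fun s => by
    rw [hxdef]; exact Finset.sum_nonneg fun i _ => sq_nonneg _
  have hS0 : ∀ s, 0 ≤ S s := fun s => by
    rw [hSdef]; exact tsum_nonneg fun k => sq_nonneg _
  -- derivative of w with q
  have hw' : ∀ s k, HasDerivAt (w k) (lam k * w k s + q k s) s := by
    intro s k
    have : lam k * w k s + a k * (v s : ℂ) + b k * (v_d s : ℂ) + r k s
        = lam k * w k s + q k s := by rw [hqdef]; ring
    exact this ▸ hw s k
  have hwc : ∀ k, Continuous (w k) := fun k =>
    Differentiable.continuous fun s => (hw' s k).differentiableAt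
  have hwsqc : ∀ k, Continuous (fun s => ‖w k s‖^2) := fun k => ((hwc k).norm).pow 2
  -- continuity of x and each X coordinate
  have hXc : ∀ i, Continuous (fun s => X s i) := fun i =>
    Differentiable.continuous fun s => (hX s i).differentiableAt
  have hxc : Continuous x := by
    have : Continuous fun s => ∑ i, (X s i)^2 :=
      continuous_finset_sum _ fun i _ => (hXc i).pow 2
    exact (funext hxdef : x = _) ▸ this
  -- derivative of F
  have hFD : ∀ s, HasDerivAt F (F' s) s := by
    intro s
    have h1 : HasDerivAt (fun u => ∑ i, ∑ j, X u i * P i j * X u j)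
        (∑ i, ∑ j, (XD s i * P i j * X s j + X s i * P i j * XD s j)) s := by
      apply HasDerivAt.fun_sum
      intro i _
      apply HasDerivAt.fun_sum
      intro j _
      rw [hXDdef s i, hXDdef s j]
      exact (((hX s i).mul_const (P i j)).mul (hX s j))
    have h2 := h1.const_mul M
    rw [hF'def, funext hFdef]
    exact h2
  -- bound on F'
  have hγ0 : ∀ s, (0:ℝ) ≤ ∑ i, (Γ s i)^2 := fun s => Finset.sum_nonneg fun i _ => sq_nonneg _
  have hF'le : ∀ s, F' s ≤ -(3/4)*M* x s + 4*M*p^2*(C₀^2 * R s + 2*(z_r s)^2) := by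
    intro s
    have hsplit : F' s = M * ((-(x s)) + ((∑ i, ∑ j, Γ s i * P i j * X s j)
        + ∑ i, ∑ j, X s i * P i j * Γ s j)) := by
      rw [hF'def]
      have e : ∀ i : Fin m, ∀ j : Fin m, XD s i * P i j * X s j + X s i * P i j * XD s j =
          ((A_K.mulVec (X s)) i * P i j * X s j + X s i * P i j * (A_K.mulVec (X s)) j)
          + (Γ s i * P i j * X s j + X s i * P i j * Γ s j) := by
        intro i j; rw [hXDdef s i, hXDdef s j]; ring
      have e2 : ∑ i, ∑ j, (XD s i * P i j * X s j + X s i * P i j * XD s j)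
          = ((∑ i, ∑ j, (A_K.mulVec (X s)) i * P i j * X s j)
              + ∑ i, ∑ j, X s i * P i j * (A_K.mulVec (X s)) j)
            + ((∑ i, ∑ j, Γ s i * P i j * X s j) + ∑ i, ∑ j, X s i * P i j * Γ s j) := by
        simp only [e, Finset.sum_add_distrib]
      rw [e2, lyap_sum A_K P hLyap (X s), hxdef]
    -- pointwise bounds
    have hXb : ∀ j, |X s j| ≤ Real.sqrt (x s) := by
      intro j
      rw [← Real.sqrt_sq_eq_abs]
      apply Real.sqrt_le_sqrt
      rw [hxdef]
      exact Finset.single_le_sum (f := fun i => (X s i)^2) (fun i _ => sq_nonneg _)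
        (Finset.mem_univ j)
    have hΓb : ∀ j, |Γ s j| ≤ Real.sqrt (∑ i, (Γ s i)^2) := by
      intro j
      rw [← Real.sqrt_sq_eq_abs]
      apply Real.sqrt_le_sqrt
      exact Finset.single_le_sum (f := fun i => (Γ s i)^2) (fun i _ => sq_nonneg _)
        (Finset.mem_univ j)
    obtain ⟨g2, hg2⟩ : ∃ g2 : ℝ, g2 = Real.sqrt (∑ i, (Γ s i)^2) := ⟨_, rfl⟩
    obtain ⟨x2, hx2⟩ : ∃ x2 : ℝ, x2 = Real.sqrt (x s) := ⟨_, rfl⟩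
    have hg20 : (0:ℝ) ≤ g2 := hg2 ▸ Real.sqrt_nonneg _
    have hx20 : (0:ℝ) ≤ x2 := hx2 ▸ Real.sqrt_nonneg _
    have hg2x2 : (0:ℝ) ≤ g2 * x2 := mul_nonneg hg20 hx20
    have hterm : ∀ (u1 u2 : ℝ), |u1| ≤ g2 → |u2| ≤ x2 → ∀ c : ℝ,
        u1 * c * u2 ≤ |c| * (g2 * x2) := by
      intro u1 u2 h1 h2 c
      calc u1 * c * u2 ≤ |u1 * c * u2| := le_abs_self _
      _ = |u1| * |c| * |u2| := by rw [abs_mul, abs_mul]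
      _ ≤ g2 * |c| * x2 := by
          apply mul_le_mul (mul_le_mul_of_nonneg_right h1 (abs_nonneg c)) h2 (abs_nonneg _)
          positivity
      _ = |c| * (g2 * x2) := by ring
    have hcross1 : (∑ i, ∑ j, Γ s i * P i j * X s j) ≤ p * (g2 * x2) := by
      rw [hpdef, Finset.sum_mul]
      apply Finset.sum_le_sum
      intro i _
      rw [Finset.sum_mul]
      apply Finset.sum_le_sum
      intro j _
      exact hterm _ _ (hg2 ▸ hΓb i) (hx2 ▸ hXb j) (P i j)
    have hcross2 : (∑ i, ∑ j, X s i * P i j * Γ s j) ≤ p * (g2 * x2) := by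
      rw [hpdef, Finset.sum_mul]
      apply Finset.sum_le_sum
      intro i _
      rw [Finset.sum_mul]
      apply Finset.sum_le_sum
      intro j _
      have := hterm (Γ s j) (X s i) (hg2 ▸ hΓb j) (hx2 ▸ hXb i) (P i j)
      calc X s i * P i j * Γ s j = Γ s j * P i j * X s i := by ring
      _ ≤ |P i j| * (g2 * x2) := this
    have hsq1 : x2^2 = x s := by rw [hx2]; exact Real.sq_sqrt (hx0 s)
    have hsq2 : g2^2 = ∑ i, (Γ s i)^2 := by rw [hg2]; exact Real.sq_sqrt (hγ0 s)
    have hγle : (∑ i, (Γ s i)^2) ≤ C₀^2 * R s + 2 * (z_r s)^2 := hΓ s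
    have hAM : M * ((∑ i, ∑ j, Γ s i * P i j * X s j) + ∑ i, ∑ j, X s i * P i j * Γ s j)
        ≤ (1/4)*M*x s + 4*M*p^2*(C₀^2 * R s + 2*(z_r s)^2) := by
      have h1 : M * ((∑ i, ∑ j, Γ s i * P i j * X s j) + ∑ i, ∑ j, X s i * P i j * Γ s j)
          ≤ M * (2 * p * (g2 * x2)) := by
        apply mul_le_mul_of_nonneg_left _ hM0.le
        linarith
      have h2 : M * (2 * p * (g2 * x2)) ≤ (1/4)*M*(x2^2) + 4*M*p^2*(g2^2) := by
        nlinarith [mul_nonneg hM0.le (sq_nonneg (x2 - 4*p*g2)), hp0, hg2x2]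
      have h3 : 4*M*p^2*(g2^2) ≤ 4*M*p^2*(C₀^2 * R s + 2*(z_r s)^2) := by
        apply mul_le_mul_of_nonneg_left _ (by positivity)
        rw [hsq2]; exact hγle
      rw [hsq1] at h2
      linarith
    rw [hsplit, mul_add]
    have : M * (-(x s)) = -(M * x s) := by ring
    linarith [hAM]
  -- S and its derivative
  have hSV : ∀ s, S s = 2*(V s - F s) := by
    intro s; rw [hSdef, hV s, hFdef]; ring
  have hSD : ∀ s, HasDerivAt S (2*(V' s - F' s)) s := by
    intro s
    have h := ((hV' s).sub (hFD s)).const_mul (2:ℝ)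
    have he : S = fun u => 2*(V u - F u) := funext hSV
    rw [he]
    exact h
  have hSc : Continuous S := Differentiable.continuous fun s => (hSD s).differentiableAt
  -- bounds on q
  have hq3 : ∀ s k, ‖q k s‖^2 ≤ 3*(‖a k‖^2*(v s)^2 + ‖b k‖^2*(v_d s)^2 + ‖r k s‖^2) := by
    intro s k
    rw [hqdef]
    have h := three_sq_bound (a k * ((v s : ℝ) : ℂ)) (b k * ((v_d s : ℝ) : ℂ)) (r k s)
    rw [norm_mul, norm_mul, Complex.norm_real, Complex.norm_real, Real.norm_eq_abs,
      Real.norm_eq_abs, mul_pow, mul_pow, sq_abs, sq_abs] at h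
    exact h
  have hqRHS_sum : ∀ s, Summable (fun k =>
      3*(‖a k‖^2*(v s)^2 + ‖b k‖^2*(v_d s)^2 + ‖r k s‖^2)) := by
    intro s
    apply Summable.mul_left
    exact ((hsa.mul_right _).add (hsb.mul_right _)).add (hsr s)
  have hqsum : ∀ s, Summable (fun k => ‖q k s‖^2) := fun s =>
    Summable.of_nonneg_of_le (fun k => sq_nonneg _) (hq3 s) (hqRHS_sum s)
  have hvsq : ∀ s, (v s)^2 ≤ x s := by
    intro s
    calc (v s)^2 = |v s|^2 := (sq_abs _).symm
    _ ≤ (Real.sqrt (∑ i, (X s i)^2))^2 := by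
        apply pow_le_pow_left₀ (abs_nonneg _) (hv s)
    _ = ∑ i, (X s i)^2 := Real.sq_sqrt (Finset.sum_nonneg fun i _ => sq_nonneg _)
    _ = x s := (hxdef s).symm
  have hvdsq : ∀ s, (v_d s)^2 ≤ Knorm^2 * x s := by
    intro s
    rw [hvd s, hxdef]
    calc (∑ i, KK i * X s i)^2 ≤ (∑ i, (KK i)^2) * ∑ i, (X s i)^2 :=
      Finset.sum_mul_sq_le_sq_mul_sq _ _ _
    _ ≤ Knorm^2 * ∑ i, (X s i)^2 :=
      mul_le_mul_of_nonneg_right hKn (Finset.sum_nonneg fun i _ => sq_nonneg _)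
  obtain ⟨G, hGdef⟩ : ∃ G : ℝ → ℝ, ∀ s, G s = (3*(na2 + nb2*Knorm^2)/m_R) * x s
      + (3*ε^2*C₁^2/m_R) * (x s + S s) := ⟨_, fun _ => rfl⟩
  have hGc : Continuous G := by
    have h : Continuous fun s => (3*(na2 + nb2*Knorm^2)/m_R) * x s
        + (3*ε^2*C₁^2/m_R) * (x s + S s) :=
      (continuous_const.mul hxc).add (continuous_const.mul (hxc.add hSc))
    exact (funext hGdef) ▸ h
  have hqG : ∀ s, ∑' k, ‖q k s‖^2 ≤ G s := by
    intro s
    have h1 : ∑' k, ‖q k s‖^2 ≤ ∑' k, 3*(‖a k‖^2*(v s)^2 + ‖b k‖^2*(v_d s)^2 + ‖r k s‖^2) :=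
      Summable.tsum_le_tsum (hq3 s) (hqsum s) (hqRHS_sum s)
    have h2 : ∑' k, 3*(‖a k‖^2*(v s)^2 + ‖b k‖^2*(v_d s)^2 + ‖r k s‖^2)
        = 3*((∑' k, ‖a k‖^2)*(v s)^2 + (∑' k, ‖b k‖^2)*(v_d s)^2 + ∑' k, ‖r k s‖^2) := by
      rw [tsum_mul_left]
      congr 1
      rw [Summable.tsum_add ((hsa.mul_right _).add (hsb.mul_right _)) (hsr s),
        Summable.tsum_add (hsa.mul_right _) (hsb.mul_right _), tsum_mul_right, tsum_mul_right]
    have hta : (∑' k, ‖a k‖^2)*(v s)^2 ≤ (na2/m_R) * x s :=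
      mul_le_mul hna (hvsq s) (sq_nonneg _) hna0
    have htb : (∑' k, ‖b k‖^2)*(v_d s)^2 ≤ (nb2/m_R) * (Knorm^2 * x s) :=
      mul_le_mul hnb (hvdsq s) (sq_nonneg _) hnb0
    have htr : (∑' k, ‖r k s‖^2) ≤ (ε^2*C₁^2*(x s + S s))/m_R := by
      refine le_trans (hr s) ?_
      have hb := hRb s
      rw [← hxdef, ← hSdef] at hb
      exact (div_le_div_iff_of_pos_right hmR).mpr hb
    rw [hGdef]
    calc ∑' k, ‖q k s‖^2
        ≤ 3*((∑' k, ‖a k‖^2)*(v s)^2 + (∑' k, ‖b k‖^2)*(v_d s)^2 + ∑' k, ‖r k s‖^2) := by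
          rw [← h2]; exact h1
    _ ≤ 3*((na2/m_R) * x s + (nb2/m_R) * (Knorm^2 * x s) + (ε^2*C₁^2*(x s + S s))/m_R) := by
          linarith
    _ = (3*(na2 + nb2*Knorm^2)/m_R) * x s + (3*ε^2*C₁^2/m_R) * (x s + S s) := by
          field_simp
  -- nonnegativity of G and per-term bound
  have hG0 : ∀ s, 0 ≤ G s := fun s => le_trans (tsum_nonneg fun k => sq_nonneg _) (hqG s)
  have hqsqle : ∀ s k, ‖q k s‖^2 ≤ G s := fun s k =>
    le_trans (Summable.le_tsum (hqsum s) k fun j _ => sq_nonneg _) (hqG s)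
  have hqm : ∀ k, Measurable (q k) := by
    intro k
    have he : q k = fun s => deriv (w k) s - lam k * w k s := by
      funext s
      have hd := (hw' s k).deriv
      rw [hd]; ring
    have hm : Measurable fun s => deriv (w k) s - lam k * w k s :=
      (measurable_deriv _).sub (((hwc k).measurable).const_mul _)
    rw [he]; exact hm
  have hqsqm : ∀ k, Measurable (fun s => ‖q k s‖^2) := fun k => ((hqm k).norm).pow_const 2
  -- the integral inequality
  have hkey : ∀ h' : ℝ, 0 < h' → S (t + h') - S t ≤ ∫ s in t..(t+h'), (-(S s) + G s) := by
    intro h' hh'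
    have hab : t ≤ t + h' := by linarith
    obtain ⟨φ, hφdef⟩ : ∃ φ : {k : ℤ // (n₀ : ℤ) + 1 ≤ |k|} → ℝ → ℝ, ∀ k s,
        φ k s = 2 * ((starRingEnd ℂ) (w k s) * (lam k * w k s + q k s)).re := ⟨_, fun _ _ => rfl⟩
    have hwd : ∀ k s, HasDerivAt (fun u => ‖w k u‖^2) (φ k s) s := by
      intro k s
      rw [hφdef]
      exact normsq_hasDerivAt (hw' s k)
    have hφm : ∀ k, Measurable (φ k) := by
      intro k
      have he : φ k = fun s =>
          2 * ((starRingEnd ℂ) (w k s) * (lam k * w k s + q k s)).re := funext (hφdef k)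
      rw [he]
      apply Measurable.const_mul
      exact Complex.measurable_re.comp (((continuous_star.comp (hwc k)).measurable).mul
        ((((hwc k).measurable).const_mul _).add (hqm k)))
    have hφb : ∀ k s, |φ k s| ≤ 2*‖w k s‖*(‖lam k‖*‖w k s‖ + Real.sqrt (G s)) := by
      intro k s
      rw [hφdef]
      have h1 : |(((starRingEnd ℂ) (w k s)) * (lam k * w k s + q k s)).re|
          ≤ ‖w k s‖ * ‖lam k * w k s + q k s‖ := by
        calc |(((starRingEnd ℂ) (w k s)) * (lam k * w k s + q k s)).re|
            ≤ ‖((starRingEnd ℂ) (w k s)) * (lam k * w k s + q k s)‖ := Complex.abs_re_le_norm _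
        _ = ‖(starRingEnd ℂ) (w k s)‖ * ‖lam k * w k s + q k s‖ := norm_mul _ _
        _ = ‖w k s‖ * ‖lam k * w k s + q k s‖ := by rw [RCLike.norm_conj]
      have h2 : ‖lam k * w k s + q k s‖ ≤ ‖lam k‖*‖w k s‖ + ‖q k s‖ :=
        le_trans (norm_add_le _ _) (by rw [norm_mul])
      have h3 : ‖q k s‖ ≤ Real.sqrt (G s) :=
        (Real.le_sqrt (norm_nonneg _) (hG0 s)).mpr (hqsqle s k)
      have h4 : |2 * (((starRingEnd ℂ) (w k s)) * (lam k * w k s + q k s)).re|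
          = 2 * |(((starRingEnd ℂ) (w k s)) * (lam k * w k s + q k s)).re| := by
        rw [abs_mul]; norm_num
      rw [h4]
      have h5 : ‖w k s‖ * ‖lam k * w k s + q k s‖
          ≤ ‖w k s‖*(‖lam k‖*‖w k s‖ + Real.sqrt (G s)) := by
        apply mul_le_mul_of_nonneg_left _ (norm_nonneg _)
        linarith
      nlinarith [norm_nonneg (w k s), h1, h5]
    have hgc : ∀ k, Continuous (fun s => 2*‖w k s‖*(‖lam k‖*‖w k s‖ + Real.sqrt (G s))) :=
      fun k => (continuous_const.mul (hwc k).norm).mul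
        ((continuous_const.mul (hwc k).norm).add hGc.sqrt)
    have hφint : ∀ k, IntervalIntegrable (φ k) volume t (t+h') := by
      intro k
      apply IntervalIntegrable.mono_fun ((hgc k).intervalIntegrable t (t+h'))
        ((hφm k).aestronglyMeasurable)
      apply Filter.Eventually.of_forall
      intro s
      simp only [Real.norm_eq_abs]
      exact le_trans (hφb k s) (le_abs_self _)
    have hqint : ∀ k, IntervalIntegrable (fun s => ‖q k s‖^2) volume t (t+h') := by
      intro k
      apply IntervalIntegrable.mono_fun (hGc.intervalIntegrable t (t+h'))
        ((hqsqm k).aestronglyMeasurable)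
      apply Filter.Eventually.of_forall
      intro s
      simp only [Real.norm_eq_abs]
      rw [abs_of_nonneg (sq_nonneg _)]
      exact le_trans (hqsqle s k) (le_abs_self _)
    have hwint : ∀ k, IntervalIntegrable (fun s => ‖w k s‖^2) volume t (t+h') :=
      fun k => (hwsqc k).intervalIntegrable _ _
    have hFTC : ∀ k, ∫ s in t..(t+h'), φ k s = ‖w k (t+h')‖^2 - ‖w k t‖^2 := by
      intro k
      exact intervalIntegral.integral_eq_sub_of_hasDerivAt (fun s _ => hwd k s) (hφint k)
    have hIk : ∀ k, ∫ s in t..(t+h'), φ k s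
        ≤ ∫ s in t..(t+h'), (-(‖w k s‖^2) + ‖q k s‖^2) := by
      intro k
      apply intervalIntegral.integral_mono_on hab (hφint k)
        ((((hwsqc k).neg.intervalIntegrable _ _)).add (hqint k))
      intro s _
      rw [hφdef]
      exact quad_bound _ _ _ (hlam k).le
    have hsplitI : ∀ k, (∫ s in t..(t+h'), (-(‖w k s‖^2) + ‖q k s‖^2))
        = -(∫ s in t..(t+h'), ‖w k s‖^2) + ∫ s in t..(t+h'), ‖q k s‖^2 := by
      intro k
      rw [intervalIntegral.integral_add (f := fun s => -(‖w k s‖^2)) ((hwsqc k).neg.intervalIntegrable _ _) (hqint k),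
        intervalIntegral.integral_neg]
    obtain ⟨E, hEdef⟩ : ∃ E : {k : ℤ // (n₀ : ℤ) + 1 ≤ |k|} → ℝ,
        ∀ k, E k = ∫ s in t..(t+h'), ‖q k s‖^2 := ⟨_, fun _ => rfl⟩
    obtain ⟨Lk, hLdef⟩ : ∃ Lk : {k : ℤ // (n₀ : ℤ) + 1 ≤ |k|} → ℝ,
        ∀ k, Lk k = ∫ s in t..(t+h'), ‖w k s‖^2 := ⟨_, fun _ => rfl⟩
    have hE0 : ∀ k, 0 ≤ E k := fun k => by
      rw [hEdef]; exact intervalIntegral.integral_nonneg hab fun u _ => sq_nonneg _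
    have hLnn : ∀ k, 0 ≤ Lk k := fun k => by
      rw [hLdef]; exact intervalIntegral.integral_nonneg hab fun u _ => sq_nonneg _
    have hEub : ∀ u : Finset {k : ℤ // (n₀ : ℤ) + 1 ≤ |k|},
        ∑ k ∈ u, E k ≤ ∫ s in t..(t+h'), G s := by
      intro u
      have h1 : ∑ k ∈ u, E k = ∫ s in t..(t+h'), (∑ k ∈ u, ‖q k s‖^2) := by
        rw [intervalIntegral.integral_finset_sum (fun k _ => hqint k)]
        exact Finset.sum_congr rfl fun k _ => hEdef k
      rw [h1]
      have hsint : IntervalIntegrable (fun s => ∑ k ∈ u, ‖q k s‖^2) volume t (t+h') := by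
        have h2 := IntervalIntegrable.sum u (fun k (_ : k ∈ u) => hqint k)
        have he : (∑ k ∈ u, fun s => ‖q k s‖^2) = fun s => ∑ k ∈ u, ‖q k s‖^2 :=
          funext fun s => by simp
        rwa [he] at h2
      apply intervalIntegral.integral_mono_on hab hsint (hGc.intervalIntegrable _ _)
      intro s _
      exact le_trans (Summable.sum_le_tsum u (fun k _ => sq_nonneg _) (hqsum s)) (hqG s)
    have hEsum : Summable E := summable_of_sum_le hE0 hEub
    have hEle : ∑' k, E k ≤ ∫ s in t..(t+h'), G s := Summable.tsum_le_of_sum_le hEsum hEub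
    -- the L-part, via ENNReal
    have hmono : ∀ k, IntegrableOn (fun s => ‖w k s‖^2) (Set.Ioc t (t+h')) volume :=
      fun k => (hwsqc k).integrableOn_Ioc
    have hSint : IntegrableOn S (Set.Ioc t (t+h')) volume := hSc.integrableOn_Ioc
    have hA1 : ∀ k, ENNReal.ofReal (Lk k)
        = ∫⁻ s in Set.Ioc t (t+h'), ENNReal.ofReal (‖w k s‖^2) := by
      intro k
      rw [hLdef, intervalIntegral.integral_of_le hab]
      exact ofReal_integral_eq_lintegral_ofReal (hmono k)
        (Filter.Eventually.of_forall fun s => sq_nonneg _)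
    have hA4 : ENNReal.ofReal (∫ s in t..(t+h'), S s) = ∑' k, ENNReal.ofReal (Lk k) := by
      rw [intervalIntegral.integral_of_le hab]
      rw [ofReal_integral_eq_lintegral_ofReal hSint
        (Filter.Eventually.of_forall fun s => hS0 s)]
      calc ∫⁻ s in Set.Ioc t (t+h'), ENNReal.ofReal (S s)
          = ∫⁻ s in Set.Ioc t (t+h'), ∑' k, ENNReal.ofReal (‖w k s‖^2) := by
            apply lintegral_congr
            intro s
            rw [hSdef]
            exact ENNReal.ofReal_tsum_of_nonneg (fun k => sq_nonneg _) (hsw s)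
      _ = ∑' k, ∫⁻ s in Set.Ioc t (t+h'), ENNReal.ofReal (‖w k s‖^2) :=
            lintegral_tsum fun k => (((hwsqc k).measurable).ennreal_ofReal).aemeasurable
      _ = ∑' k, ENNReal.ofReal (Lk k) := tsum_congr fun k => (hA1 k).symm
    have hLsum : Summable Lk := by
      have hne : (∑' k, ENNReal.ofReal (Lk k)) ≠ ⊤ := by
        rw [← hA4]; exact ENNReal.ofReal_ne_top
      have h := ENNReal.summable_toReal hne
      refine h.congr fun k => ?_
      rw [ENNReal.toReal_ofReal (hLnn k)]
    have hLge : ∫ s in t..(t+h'), S s = ∑' k, Lk k := by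
      have h := hA4
      rw [← ENNReal.ofReal_tsum_of_nonneg hLnn hLsum] at h
      exact (ENNReal.ofReal_eq_ofReal_iff
        (intervalIntegral.integral_nonneg hab fun u _ => hS0 u) (tsum_nonneg hLnn)).mp h
    -- final chain
    have hs1 : S (t+h') - S t = ∑' k, (‖w k (t+h')‖^2 - ‖w k t‖^2) := by
      rw [hSdef, hSdef]
      exact (Summable.tsum_sub (hsw (t+h')) (hsw t)).symm
    have hs2 : ∑' k, (‖w k (t+h')‖^2 - ‖w k t‖^2) ≤ ∑' k, (-(Lk k) + E k) := by
      apply Summable.tsum_le_tsum _ ((hsw (t+h')).sub (hsw t)) ((hLsum.neg).add hEsum)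
      intro k
      rw [← hFTC k, hLdef k, hEdef k, ← hsplitI k]
      exact hIk k
    have hs3 : ∑' k, (-(Lk k) + E k) = -(∑' k, Lk k) + ∑' k, E k := by
      rw [Summable.tsum_add (hLsum.neg) hEsum, tsum_neg]
    have hs4 : ∫ s in t..(t+h'), (-(S s) + G s)
        = -(∫ s in t..(t+h'), S s) + ∫ s in t..(t+h'), G s := by
      rw [intervalIntegral.integral_add (f := fun s => -(S s)) (hSc.neg.intervalIntegrable _ _)
        (hGc.intervalIntegrable _ _), intervalIntegral.integral_neg]
    rw [hs1, hs4, hLge]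
    linarith [hs2, hs3, hEle]
  -- derivative comparison
  have hslope : 2*(V' t - F' t) ≤ -(S t) + G t := by
    have hgder : HasDerivAt (fun u => ∫ s in t..u, (-(S s) + G s)) (-(S t) + G t) t := by
      have hc : Continuous (fun s => -(S s) + G s) := hSc.neg.add hGc
      exact intervalIntegral.integral_hasDerivAt_right (hc.intervalIntegrable t t)
        (hc.stronglyMeasurableAtFilter volume _) hc.continuousAt
    apply deriv_le_of_slope (hSD t) hgder
    intro h' hh'
    have h := hkey h' hh'
    rw [intervalIntegral.integral_same]
    linarith
  -- assembling the main pointwise bound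
  have hε2 : ε^2 * D ≤ min (M/8) (1/4) := by
    have h1 : ε^2 ≤ (min (M/8) (1/4)) / (D+1) := by
      have hy : (0:ℝ) ≤ (min (M/8) (1/4)) / (D+1) := by positivity
      exact (Real.le_sqrt hε.le hy).mp hεub
    have h2 : ε^2*D ≤ ((min (M/8) (1/4))/(D+1))*D := mul_le_mul_of_nonneg_right h1 hD0
    have h3 : ((min (M/8) (1/4))/(D+1))*D ≤ min (M/8) (1/4) := by
      rw [div_mul_eq_mul_div, div_le_iff₀ (by linarith : (0:ℝ) < D+1)]
      nlinarith [hmin.le, hD0]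
    linarith
  have hεx : ε^2*D*(x t) ≤ (M/8)*x t :=
    mul_le_mul_of_nonneg_right (le_trans hε2 (min_le_left _ _)) (hx0 t)
  have hεS : ε^2*D*(S t) ≤ (1/4)*(S t) :=
    mul_le_mul_of_nonneg_right (le_trans hε2 (min_le_right _ _)) (hS0 t)
  have hc₁x : (3*(na2+nb2*Knorm^2)/m_R)*(x t) ≤ M*(x t) :=
    mul_le_mul_of_nonneg_right hM.le (hx0 t)
  have hRt : R t ≤ ε^2*C₁^2*(x t + S t) := by
    have hb := hRb t
    rwa [← hxdef, ← hSdef] at hb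
  have hRterm : 4*M*p^2*(C₀^2*(R t)) ≤ 4*M*p^2*(C₀^2*(ε^2*C₁^2*(x t + S t))) := by
    apply mul_le_mul_of_nonneg_left _ (by positivity)
    exact mul_le_mul_of_nonneg_left hRt (sq_nonneg _)
  have hDid : 4*M*p^2*(C₀^2*(ε^2*C₁^2*(x t + S t)))
      + (1/2)*((3*ε^2*C₁^2/m_R)*(x t + S t)) = ε^2*D*(x t) + ε^2*D*(S t) := by
    rw [hDdef]; field_simp
  have hmain : V' t ≤ -(M/8)*(x t) - (1/4)*(S t) + (8*M*p^2)*(z_r t)^2 := by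
    have h2 := hF'le t
    have hG := hGdef t
    nlinarith [hslope, h2, hεx, hεS, hc₁x, hRterm, hDid, hG]
  -- bound V from above
  have hXPX : (∑ i, ∑ j, X t i * P i j * X t j) ≤ p * x t := by
    have hXb : ∀ j, |X t j| ≤ Real.sqrt (x t) := by
      intro j
      rw [← Real.sqrt_sq_eq_abs]
      apply Real.sqrt_le_sqrt
      rw [hxdef]
      exact Finset.single_le_sum (f := fun i => (X t i)^2) (fun i _ => sq_nonneg _)
        (Finset.mem_univ j)
    rw [hpdef, Finset.sum_mul]
    apply Finset.sum_le_sum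
    intro i _
    rw [Finset.sum_mul]
    apply Finset.sum_le_sum
    intro j _
    calc X t i * P i j * X t j ≤ |X t i * P i j * X t j| := le_abs_self _
    _ = |X t i| * |P i j| * |X t j| := by rw [abs_mul, abs_mul]
    _ ≤ Real.sqrt (x t) * |P i j| * Real.sqrt (x t) := by
        apply mul_le_mul (mul_le_mul_of_nonneg_right (hXb i) (abs_nonneg _)) (hXb j)
          (abs_nonneg _)
        positivity
    _ = |P i j| * (Real.sqrt (x t) * Real.sqrt (x t)) := by ring
    _ = |P i j| * x t := by rw [Real.mul_self_sqrt (hx0 t)]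
  have hVb : V t ≤ M*p*(x t) + (1/2)*(S t) := by
    rw [hV t, ← hSdef]
    have := mul_le_mul_of_nonneg_left hXPX hM0.le
    linarith
  -- conclude
  have hκpos : (0:ℝ) < min (1/(16*(max p 1))) (1/4) := lt_min (by positivity) (by norm_num)
  have hκ1 : min (1/(16*(max p 1))) (1/4:ℝ) ≤ 1/(16*(max p 1)) := min_le_left _ _
  have hκ2 : min (1/(16*(max p 1))) (1/4:ℝ) ≤ 1/4 := min_le_right _ _
  have hpmax : p ≤ max p 1 := le_max_left _ _
  have hmax0 : (0:ℝ) < max p 1 := lt_of_lt_of_le one_pos (le_max_right _ _)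
  have hb16 : (0:ℝ) < 1/(16*(max p 1)) := by
    apply div_pos one_pos
    nlinarith [hmax0]
  have hκp : (min (1/(16*(max p 1))) (1/4:ℝ)) * p ≤ 1/16 := by
    calc (min (1/(16*(max p 1))) (1/4:ℝ)) * p ≤ (1/(16*(max p 1))) * (max p 1) :=
      mul_le_mul hκ1 hpmax hp0 hb16.le
    _ = 1/16 := by field_simp
  have hterm1 : 2*(min (1/(16*(max p 1))) (1/4:ℝ))*(M*p*(x t)) ≤ (M/8)*(x t) := by
    have h := mul_le_mul_of_nonneg_right hκp (mul_nonneg hM0.le (hx0 t))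
    linarith [h]
  have hterm2 : 2*(min (1/(16*(max p 1))) (1/4:ℝ))*((1/2)*(S t)) ≤ (1/4)*(S t) := by
    have h := mul_le_mul_of_nonneg_right hκ2 (hS0 t)
    linarith [h]
  have hVineq : -2*(min (1/(16*(max p 1))) (1/4:ℝ))*(V t) ≥ -((M/8)*(x t)) - (1/4)*(S t) := by
    have h := mul_le_mul_of_nonneg_left hVb (by positivity :
      (0:ℝ) ≤ 2*(min (1/(16*(max p 1))) (1/4:ℝ)))
    linarith [hterm1, hterm2, h]
  have hz : (0:ℝ) ≤ (z_r t)^2 := sq_nonneg _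
  have hzz : (8*M*p^2+1)*(z_r t)^2 = (8*M*p^2)*(z_r t)^2 + (z_r t)^2 := by ring
  linarith [hmain, hVineq, hz, hzz]
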